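/- Under the hypotheses of the generalized BRS-inequality, E[N(n,s)] ≤ Σ_{k=1}^n F_k(t(n,s)) − (s − E[S_{A(n,s)}])/t(n,s). -/

import Mathlib

open MeasureTheory ProbabilityTheory Finset Set
open scoped Classical

lemma brs_char {n : ℕ} {s : ℝ} (X : Fin n → ℝ) (hX : ∀ k, 0 < X k) (N : ℕ)
    (hN : N = ((Finset.univ.powerset.filter
      (fun A : Finset (Fin n) => ∑ i ∈ A, X i ≤ s)).sup Finset.card))
    (A : Finset (Fin n)) (hc : A.card = N) (hsum : ∑ i ∈ A, X i ≤ s)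
    (hinit : ∀ i ∈ A, ∀ j, (X j < X i ∨ (X j = X i ∧ j < i)) → j ∈ A)
    (i : Fin n) :
    i ∈ A ↔ ∑ j ∈ Finset.univ.filter (fun j => X j < X i ∨ (X j = X i ∧ j ≤ i)), X j ≤ s := by
  set C := univ.filter (fun j => X j < X i ∨ (X j = X i ∧ j ≤ i)) with hC
  have hiC : i ∈ C := by simp [hC]
  constructor
  · intro hi
    have hCA : C ⊆ A := by
      intro j hj
      rw [hC, mem_filter] at hj
      rcases hj.2 with h | ⟨he, hle⟩
      · exact hinit i hi j (Or.inl h)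
      · rcases lt_or_eq_of_le hle with h | h
        · exact hinit i hi j (Or.inr ⟨he, h⟩)
        · exact h ▸ hi
    calc ∑ j ∈ C, X j ≤ ∑ j ∈ A, X j :=
          Finset.sum_le_sum_of_subset_of_nonneg hCA (fun j _ _ => (hX j).le)
      _ ≤ s := hsum
  · intro hCs
    by_contra hi
    have hsub : A ⊆ C.erase i := by
      intro a ha
      rw [mem_erase]
      refine ⟨fun h => hi (h ▸ ha), ?_⟩
      rw [hC, mem_filter]
      refine ⟨mem_univ _, ?_⟩
      rcases lt_trichotomy (X a) (X i) with h | h | h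
      · exact Or.inl h
      · rcases lt_trichotomy a i with h2 | h2 | h2
        · exact Or.inr ⟨h, h2.le⟩
        · exact absurd (h2 ▸ ha) hi
        · exact absurd (hinit a ha i (Or.inr ⟨h.symm, h2⟩)) hi
      · exact absurd (hinit a ha i (Or.inl h)) hi
    have h1 : N ≤ (C.erase i).card := hc ▸ Finset.card_le_card hsub
    have h2 : C.card ≤ N := by
      rw [hN]
      exact Finset.le_sup (Finset.mem_filter.mpr ⟨Finset.mem_powerset.mpr (subset_univ _), hCs⟩)
    have h3 : (C.erase i).card = C.card - 1 := Finset.card_erase_of_mem hiC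
    have h4 : 0 < C.card := Finset.card_pos.mpr ⟨i, hiC⟩
    omega


theorem brs_inequality_refined
    {Ω : Type*} [MeasureSpace Ω] [IsProbabilityMeasure (ℙ : Measure Ω)]
    (n : ℕ) (s t : ℝ) (hs : 0 < s) (ht : 0 < t)
    (X : Fin n → Ω → ℝ) (hXmeas : ∀ k, Measurable (X k))
    (hXpos : ∀ k ω, 0 < X k ω)
    (F : Fin n → ℝ → ℝ)
    (hF : ∀ k x, F k x = ((Measure.map (X k) ℙ) (Iic x)).toReal)
    (hBRS : ∑ k : Fin n, ∫ x in Ioc (0:ℝ) t, x ∂(Measure.map (X k) ℙ) = s)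
    (N : Ω → ℕ)
    (hN : ∀ ω, N ω = ((Finset.univ.powerset.filter
      (fun A : Finset (Fin n) => ∑ i ∈ A, X i ω ≤ s)).sup Finset.card))
    (A : Ω → Finset (Fin n))
    (hAcard : ∀ ω, (A ω).card = N ω)
    (hAsum : ∀ ω, ∑ i ∈ A ω, X i ω ≤ s)
    (hAinit : ∀ ω, ∀ i ∈ A ω, ∀ j,
      (X j ω < X i ω ∨ (X j ω = X i ω ∧ j < i)) → j ∈ A ω) :
    ∫ ω, (N ω : ℝ) ≤
      (∑ k : Fin n, F k t) - (s - ∫ ω, ∑ i ∈ A ω, X i ω) / t := by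
  classical
  -- helper: bounded measurable functions are integrable
  have hint : ∀ (f : Ω → ℝ) (C : ℝ), Measurable f → (∀ ω, ‖f ω‖ ≤ C) →
      Integrable f ℙ := fun f C hf hb =>
    (integrable_const C).mono' hf.aestronglyMeasurable (ae_of_all _ hb)
  -- the selection condition
  set cond : Fin n → Ω → Prop := fun i ω =>
    ∑ j ∈ Finset.univ.filter (fun j => X j ω < X i ω ∨ (X j ω = X i ω ∧ j ≤ i)), X j ω ≤ s
    with hconddef
  have hchar : ∀ ω i, i ∈ A ω ↔ cond i ω := fun ω i =>
    brs_char (fun k => X k ω) (fun k => hXpos k ω) (N ω) (hN ω) (A ω)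
      (hAcard ω) (hAsum ω) (fun i hi j hj => hAinit ω i hi j hj) i
  -- measurability of the condition
  have hsummeas : ∀ i : Fin n, Measurable (fun ω =>
      ∑ j ∈ Finset.univ.filter (fun j => X j ω < X i ω ∨ (X j ω = X i ω ∧ j ≤ i)), X j ω) := by
    intro i
    have heq : (fun ω => ∑ j ∈ Finset.univ.filter
        (fun j => X j ω < X i ω ∨ (X j ω = X i ω ∧ j ≤ i)), X j ω)
        = fun ω => ∑ j : Fin n,
          if (X j ω < X i ω ∨ (X j ω = X i ω ∧ j ≤ i)) then X j ω else 0 := by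
      funext ω; exact Finset.sum_filter _ _
    rw [heq]
    apply Finset.measurable_sum
    intro j _
    by_cases hji : j ≤ i
    · have : (fun ω => if (X j ω < X i ω ∨ (X j ω = X i ω ∧ j ≤ i)) then X j ω else 0)
          = fun ω => if X j ω ≤ X i ω then X j ω else 0 := by
        funext ω; simp [hji, ← le_iff_lt_or_eq]
      rw [this]
      exact Measurable.ite (measurableSet_le (hXmeas j) (hXmeas i)) (hXmeas j) measurable_const
    · have : (fun ω => if (X j ω < X i ω ∨ (X j ω = X i ω ∧ j ≤ i)) then X j ω else 0)
          = fun ω => if X j ω < X i ω then X j ω else 0 := by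
        funext ω; simp [hji]
      rw [this]
      exact Measurable.ite (measurableSet_lt (hXmeas j) (hXmeas i)) (hXmeas j) measurable_const
  have hD : ∀ i : Fin n, MeasurableSet {ω | cond i ω} :=
    fun i => measurableSet_le (hsummeas i) measurable_const
  -- X i ω ≤ s whenever cond i ω
  have hXle : ∀ i ω, cond i ω → X i ω ≤ s := by
    intro i ω hc
    refine le_trans ?_ hc
    exact Finset.single_le_sum (fun j _ => (hXpos j ω).le)
      (Finset.mem_filter.mpr ⟨mem_univ _, Or.inr ⟨rfl, le_refl _⟩⟩)
  -- real-valued formulas for N and the selected sum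
  have hNreal : ∀ ω, (N ω : ℝ) = ∑ i : Fin n, if cond i ω then (1:ℝ) else 0 := by
    intro ω
    rw [← hAcard ω]
    have : ∀ i : Fin n, (if cond i ω then (1:ℝ) else 0) = if i ∈ A ω then (1:ℝ) else 0 :=
      fun i => if_congr (hchar ω i).symm rfl rfl
    rw [Finset.sum_congr rfl (fun i _ => this i)]
    simp [Finset.sum_boole, Finset.filter_mem_eq_inter]
  have hg : ∀ ω, ∑ i ∈ A ω, X i ω = ∑ i : Fin n, if cond i ω then X i ω else 0 := by
    intro ω
    have hA : A ω = Finset.univ.filter (fun i => cond i ω) := by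
      ext i; simp [hchar ω i]
    rw [hA, Finset.sum_filter]
  -- integrability of N and the selected sum
  have hNint : Integrable (fun ω => (N ω : ℝ)) ℙ := by
    rw [funext hNreal]
    refine integrable_finset_sum _ (fun i _ => hint _ 1 ?_ ?_)
    · exact Measurable.ite (hD i) measurable_const measurable_const
    · intro ω; by_cases h : cond i ω <;> simp [h]
  have hgint : Integrable (fun ω => ∑ i ∈ A ω, X i ω) ℙ := by
    rw [funext hg]
    refine integrable_finset_sum _ (fun i _ => hint _ s ?_ ?_)
    · exact Measurable.ite (hD i) (hXmeas i) measurable_const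
    · intro ω
      by_cases h : cond i ω
      · simp only [h, if_true, Real.norm_eq_abs, abs_le]
        exact ⟨by linarith [hXpos i ω], hXle i ω h⟩
      · simp [h, hs.le]
  -- the deficiency functions
  set u : Fin n → Ω → ℝ := fun k ω => if X k ω ≤ t then t - X k ω else 0 with hudef
  set v : Fin n → Ω → ℝ := fun k ω => if X k ω ≤ t then X k ω else 0 with hvdef
  set w : Fin n → Ω → ℝ := fun k ω => if X k ω ≤ t then t else 0 with hwdef
  have hEk : ∀ k, MeasurableSet (X k ⁻¹' Iic t) := fun k => (hXmeas k) measurableSet_Iic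
  have hEset : ∀ k, {ω | X k ω ≤ t} = X k ⁻¹' Iic t := fun k => rfl
  have humeas : ∀ k, Measurable (u k) := fun k =>
    Measurable.ite (hEk k) (measurable_const.sub (hXmeas k)) measurable_const
  have hvmeas : ∀ k, Measurable (v k) := fun k =>
    Measurable.ite (hEk k) (hXmeas k) measurable_const
  have hwmeas : ∀ k, Measurable (w k) := fun k =>
    Measurable.ite (hEk k) measurable_const measurable_const
  have huint : ∀ k, Integrable (u k) ℙ := by
    intro k
    refine hint _ t (humeas k) (fun ω => ?_)
    simp only [hudef]
    by_cases h : X k ω ≤ t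
    · rw [if_pos h, Real.norm_eq_abs, abs_le]
      constructor <;> linarith [hXpos k ω]
    · rw [if_neg h]; simpa using ht.le
  have hvint : ∀ k, Integrable (v k) ℙ := by
    intro k
    refine hint _ t (hvmeas k) (fun ω => ?_)
    simp only [hvdef]
    by_cases h : X k ω ≤ t
    · rw [if_pos h, Real.norm_eq_abs, abs_le]
      constructor <;> linarith [hXpos k ω]
    · rw [if_neg h]; simpa using ht.le
  have hwint : ∀ k, Integrable (w k) ℙ := by
    intro k
    refine hint _ t (hwmeas k) (fun ω => ?_)
    simp only [hwdef]
    by_cases h : X k ω ≤ t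
    · rw [if_pos h, Real.norm_eq_abs, abs_of_pos ht]
    · rw [if_neg h]; simpa using ht.le
  -- pointwise key inequality
  have key : ∀ ω, t * (N ω : ℝ) ≤ (∑ i ∈ A ω, X i ω) + ∑ k : Fin n, u k ω := by
    intro ω
    have h1 : ∑ i ∈ A ω, (t - X i ω) ≤ ∑ k : Fin n, u k ω := by
      calc ∑ i ∈ A ω, (t - X i ω) ≤ ∑ i ∈ A ω, u i ω := by
            refine Finset.sum_le_sum (fun i _ => ?_)
            by_cases h : X i ω ≤ t
            · simp [hudef, h]
            · simp only [hudef, h, if_false]; linarith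
        _ ≤ ∑ k : Fin n, u k ω := by
            refine Finset.sum_le_sum_of_subset_of_nonneg (Finset.subset_univ _)
              (fun k _ _ => ?_)
            by_cases h : X k ω ≤ t
            · simp only [hudef, h, if_true]; linarith
            · simp [hudef, h]
    have h2 : ∑ i ∈ A ω, (t - X i ω)
        = t * (N ω : ℝ) - ∑ i ∈ A ω, X i ω := by
      rw [Finset.sum_sub_distrib, Finset.sum_const, nsmul_eq_mul, hAcard ω, mul_comm]
    linarith
  -- integral of w : t * F k t
  have hw_int_eq : ∀ k, ∫ ω, w k ω = t * F k t := by
    intro k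
    have : w k = (X k ⁻¹' Iic t).indicator (fun _ => t) := by
      funext ω; simp [hwdef, Set.indicator_apply, Set.mem_preimage, Set.mem_Iic]
    rw [this, integral_indicator_const _ (hEk k), hF k t,
      Measure.map_apply (hXmeas k) measurableSet_Iic]
    simp [mul_comm, measureReal_def]
  -- integral of v : mass below t
  have hv_int_eq : ∀ k, ∫ ω, v k ω = ∫ x in Ioc (0:ℝ) t, x ∂(Measure.map (X k) ℙ) := by
    intro k
    have h1 : v k = (X k ⁻¹' Iic t).indicator (X k) := by
      funext ω; simp [hvdef, Set.indicator_apply, Set.mem_preimage, Set.mem_Iic]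
    have h2 : ∫ ω, v k ω = ∫ ω in X k ⁻¹' Iic t, X k ω ∂ℙ := by
      rw [h1, integral_indicator (hEk k)]
    have h3 : ∫ x in Iic t, x ∂(Measure.map (X k) ℙ) = ∫ ω in X k ⁻¹' Iic t, X k ω ∂ℙ :=
      setIntegral_map measurableSet_Iic aestronglyMeasurable_id (hXmeas k).aemeasurable
    have hnull : (Measure.map (X k) ℙ) (Iic (0:ℝ)) = 0 := by
      rw [Measure.map_apply (hXmeas k) measurableSet_Iic]
      have : X k ⁻¹' Iic (0:ℝ) = ∅ := by
        ext ω; simp [Set.mem_preimage, Set.mem_Iic, not_le, hXpos k ω]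
      simp [this]
    have hae : (Iic t : Set ℝ) =ᵐ[Measure.map (X k) ℙ] Ioc (0:ℝ) t := by
      rw [MeasureTheory.ae_eq_set]
      constructor
      · refine measure_mono_null (fun x hx => ?_) hnull
        simp only [Set.mem_diff, Set.mem_Iic, Set.mem_Ioc, not_and, not_le] at hx
        simp only [Set.mem_Iic]
        by_contra h
        push_neg at h
        exact absurd (hx.2 h) (not_lt.mpr hx.1)
      · refine measure_mono_null (fun x hx => ?_) (measure_empty (μ := Measure.map (X k) ℙ))
        exact absurd hx.1.2 hx.2
    rw [h2, ← h3]
    exact setIntegral_congr_set hae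
  have hu_int_eq : ∀ k, ∫ ω, u k ω = t * F k t - ∫ ω, v k ω := by
    intro k
    have huv : u k = fun ω => w k ω - v k ω := by
      funext ω
      simp only [hudef, hvdef, hwdef]
      by_cases h : X k ω ≤ t <;> simp [h]
    rw [huv, integral_sub (hwint k) (hvint k), hw_int_eq k]
  have hsumu_int : Integrable (fun ω => ∑ k : Fin n, u k ω) ℙ :=
    integrable_finset_sum _ (fun k _ => huint k)
  have hmain : ∫ ω, t * (N ω : ℝ) ≤ ∫ ω, ((∑ i ∈ A ω, X i ω) + ∑ k : Fin n, u k ω) :=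
    integral_mono (hNint.const_mul t) (hgint.add hsumu_int) key
  have hlhs : ∫ ω, t * (N ω : ℝ) = t * ∫ ω, (N ω : ℝ) := integral_const_mul t _
  have hrhs : ∫ ω, ((∑ i ∈ A ω, X i ω) + ∑ k : Fin n, u k ω)
      = (∫ ω, ∑ i ∈ A ω, X i ω) + (t * ∑ k : Fin n, F k t - s) := by
    rw [integral_add hgint hsumu_int, integral_finset_sum _ (fun k _ => huint k)]
    have hsum : ∑ k : Fin n, ∫ ω, u k ω = t * ∑ k : Fin n, F k t - s := by
      simp only [hu_int_eq, hv_int_eq]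
      rw [Finset.sum_sub_distrib, ← Finset.mul_sum, hBRS]
    rw [hsum]
  rw [hlhs, hrhs] at hmain
  have h2 : (s - ∫ ω, ∑ i ∈ A ω, X i ω) / t ≤ (∑ k : Fin n, F k t) - ∫ ω, (N ω : ℝ) := by
    rw [div_le_iff₀ ht]
    nlinarith [hmain]
  linarith
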